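/- arXiv:1101.4469 — 2 statements merged into one kernel-verified Lean document; each statement's English description precedes it below -/
import Mathlib

section
/- The matrix U of size (2m+2)×(2m+2) defined by U_{2i,m-j} = U_{2i,m+j+1} = ((-1)^i/√2)·Q̃_j(i;α,β,m) and U_{2i+1,m-j} = -U_{2i+1,m+j+1} = -((-1)^i/√2)·Q̃_j(i;α+1,β-1,m), for i,j ∈ {0,1,…,m}, is orthogonal: UᵀU = UUᵀ = I. -/
open Finset Matrix

/-- Pochhammer symbol `(a)_k = a(a+1)⋯(a+k-1)`. -/
noncomputable def poch (a : ℝ) (k : ℕ) : ℝ := ∏ i ∈ Finset.range k, (a + i)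

/-- The Hahn polynomial `Q_n(x;α,β,m)` as a terminating ₃F₂ series. -/
noncomputable def hahnQ (n : ℕ) (x α β : ℝ) (m : ℕ) : ℝ :=
  ∑ k ∈ Finset.range (n + 1),
    poch (-(n : ℝ)) k * poch ((n : ℝ) + α + β + 1) k * poch (-x) k /
      ((k.factorial : ℝ) * poch (α + 1) k * poch (-(m : ℝ)) k)

/-- The Hahn weight `w(x;α,β,m) = C(α+x,x) C(m+β-x,m-x)`. -/
noncomputable def hahnW (x : ℕ) (α β : ℝ) (m : ℕ) : ℝ :=
  (poch (α + 1) x / (x.factorial : ℝ)) * (poch (β + 1) (m - x) / ((m - x).factorial : ℝ))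

/-- The squared norm `h_n(α,β,m)` of the Hahn polynomials. -/
noncomputable def hahnH (n : ℕ) (α β : ℝ) (m : ℕ) : ℝ :=
  ((-1 : ℝ) ^ n * poch ((n : ℝ) + α + β + 1) (m + 1) * poch (β + 1) n * (n.factorial : ℝ)) /
    ((2 * (n : ℝ) + α + β + 1) * poch (α + 1) n * poch (-(m : ℝ)) n * (m.factorial : ℝ))

/-- Orthonormal Hahn function `Q̃_n(x;α,β,m)`. -/
noncomputable def hahnQt (n x : ℕ) (α β : ℝ) (m : ℕ) : ℝ :=
  Real.sqrt (hahnW x α β m) * hahnQ n (x : ℝ) α β m / Real.sqrt (hahnH n α β m)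

/-- The matrix `U` of eigenvectors, built from Hahn polynomials with
parameters `(α,β)` (even rows) and `(α+1,β-1)` (odd rows). -/
noncomputable def hahnU (α β : ℝ) (m : ℕ) : Matrix (Fin (2 * m + 2)) (Fin (2 * m + 2)) ℝ :=
  Matrix.of fun r c =>
    let i : ℕ := (r : ℕ) / 2
    let j : ℕ := if (c : ℕ) ≤ m then m - (c : ℕ) else (c : ℕ) - m - 1
    if (r : ℕ) % 2 = 0 then
      ((-1 : ℝ) ^ i / Real.sqrt 2) * hahnQt j i α β m
    else
      (if (c : ℕ) ≤ m then (-1 : ℝ) else 1) * ((-1 : ℝ) ^ i / Real.sqrt 2)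
        * hahnQt j i (α + 1) (β - 1) m

/-- The spin chain couplings `J_k`. -/
noncomputable def hahnJ (α β : ℝ) (m : ℕ) (k : ℕ) : ℝ :=
  if k % 2 = 1 then Real.sqrt (((k : ℝ) + 1) * ((2 * m + 1 : ℝ) - k))
  else Real.sqrt (((k : ℝ) + 2 * α + 2) * ((2 * m : ℝ) + 2 * β - k))

/-- The tridiagonal single-excitation interaction matrix `M`. -/
noncomputable def hahnM (α β : ℝ) (m : ℕ) : Matrix (Fin (2 * m + 2)) (Fin (2 * m + 2)) ℝ :=
  Matrix.of fun r c =>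
    if (r : ℕ) + 1 = (c : ℕ) then hahnJ α β m r
    else if (c : ℕ) + 1 = (r : ℕ) then hahnJ α β m c
    else 0

/-- The eigenvalues `ε_{m-k} = -2√((α+k+1)(β+k))`, `ε_{m+k+1} = 2√((α+k+1)(β+k))`. -/
noncomputable def hahnEps (α β : ℝ) (m : ℕ) (c : Fin (2 * m + 2)) : ℝ :=
  if (c : ℕ) ≤ m then
    -2 * Real.sqrt ((α + (m - (c : ℕ) : ℕ) + 1) * (β + (m - (c : ℕ) : ℕ)))
  else
    2 * Real.sqrt ((α + ((c : ℕ) - m - 1 : ℕ) + 1) * (β + ((c : ℕ) - m - 1 : ℕ)))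

/-- The correlation function `f_{r,s}(t)`. -/
noncomputable def hahnCorr (α β : ℝ) (m : ℕ) (r s : Fin (2 * m + 2)) (t : ℝ) : ℂ :=
  ∑ j : Fin (2 * m + 2),
    ((hahnU α β m r j * hahnU α β m s j : ℝ) : ℂ)
      * Complex.exp (-Complex.I * t * (hahnEps α β m j : ℝ))

section HahnAux

lemma poch_zero (a : ℝ) : poch a 0 = 1 := by simp [poch]

lemma poch_succ (a : ℝ) (k : ℕ) : poch a (k+1) = poch a k * (a + k) := by
  simp [poch, Finset.prod_range_succ]

lemma poch_succ' (a : ℝ) (k : ℕ) : poch a (k+1) = a * poch (a+1) k := by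
  rw [poch, Finset.prod_range_succ']
  have : ∀ i ∈ Finset.range k, (a + ((i:ℕ)+1 : ℕ) : ℝ) = (a+1) + (i:ℝ) := by
    intro i _; push_cast; ring
  rw [Finset.prod_congr rfl this, poch]
  push_cast; ring

lemma poch_pos {a : ℝ} (ha : 0 < a) (k : ℕ) : 0 < poch a k := by
  apply Finset.prod_pos
  intro i _
  positivity

lemma poch_nonneg {a : ℝ} (ha : 0 ≤ a) (k : ℕ) : 0 ≤ poch a k := by
  apply Finset.prod_nonneg
  intro i _
  positivity

lemma poch_neg_nat_eq (m : ℕ) : ∀ n : ℕ, n ≤ m →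
    poch (-(m:ℝ)) n = (-1)^n * (m.factorial : ℝ) / ((m-n).factorial : ℝ) := by
  intro n
  induction n with
  | zero =>
    intro _
    rw [poch_zero, pow_zero, one_mul, Nat.sub_zero, div_self (by positivity)]
  | succ n ih =>
    intro h
    have hn : n ≤ m := by omega
    rw [poch_succ, ih hn]
    have h1 : m - n = (m - (n+1)) + 1 := by omega
    have h2 : ((m - n).factorial : ℝ) = ((m-n : ℕ) : ℝ) * ((m - (n+1)).factorial : ℝ) := by
      rw [h1, Nat.factorial_succ]; push_cast [h1]; ring
    have h3 : ((m - n : ℕ) : ℝ) = (m : ℝ) - n := by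
      push_cast [Nat.cast_sub hn]; ring
    have h4 : ((m - (n+1)).factorial : ℝ) ≠ 0 := by positivity
    have h5 : ((m - n : ℕ) : ℝ) ≠ 0 := by
      have : 0 < m - n := by omega
      positivity
    have hmn : (m:ℝ) - n ≠ 0 := by rw [← h3]; exact_mod_cast h5
    rw [h2, h3]
    field_simp
    ring

lemma poch_neg_nat_ne_zero {m n : ℕ} (h : n ≤ m) : poch (-(m:ℝ)) n ≠ 0 := by
  rw [poch_neg_nat_eq m n h]
  have h1 : (m.factorial : ℝ) > 0 := by positivity
  have h2 : ((m-n).factorial : ℝ) > 0 := by positivity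
  rcases Nat.even_or_odd n with he | ho
  · rw [he.neg_one_pow]; positivity
  · rw [ho.neg_one_pow]
    have : (m.factorial : ℝ) / ((m-n).factorial : ℝ) > 0 := by positivity
    intro hc
    rw [neg_one_mul, neg_div, neg_eq_zero] at hc
    linarith

lemma poch_neg_nat_zero {m n : ℕ} (h : m < n) : poch (-(m:ℝ)) n = 0 := by
  rw [poch]
  apply Finset.prod_eq_zero (Finset.mem_range.mpr h)
  push_cast; ring

lemma vdm : ∀ (M : ℕ) (a b : ℝ),
    ∑ y ∈ Finset.range (M+1), poch a y / (y.factorial : ℝ) * (poch b (M-y) / ((M-y).factorial : ℝ))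
      = poch (a+b) M / (M.factorial : ℝ) := by
  intro M
  induction M with
  | zero => intro a b; simp [poch_zero]
  | succ M ih =>
    intro a b
    have key : ((M:ℝ)+1) * ∑ y ∈ Finset.range (M+2),
        poch a y / (y.factorial : ℝ) * (poch b (M+1-y) / ((M+1-y).factorial : ℝ))
        = (∑ y ∈ Finset.range (M+2), (y:ℝ) * (poch a y / (y.factorial : ℝ) * (poch b (M+1-y) / ((M+1-y).factorial : ℝ))))
          + ∑ y ∈ Finset.range (M+2), ((M+1-y : ℕ):ℝ) * (poch a y / (y.factorial : ℝ) * (poch b (M+1-y) / ((M+1-y).factorial : ℝ))) := by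
      rw [Finset.mul_sum, ← Finset.sum_add_distrib]
      apply Finset.sum_congr rfl
      intro y hy
      have hy' : y ≤ M+1 := by simpa [Nat.lt_succ_iff] using Finset.mem_range.mp hy
      have : ((M+1-y : ℕ):ℝ) = (M:ℝ) + 1 - (y:ℝ) := by
        push_cast [Nat.cast_sub hy']; ring
      rw [this]; ring
    have e1 : (∑ y ∈ Finset.range (M+2), (y:ℝ) * (poch a y / (y.factorial : ℝ) * (poch b (M+1-y) / ((M+1-y).factorial : ℝ))))
        = a * (poch (a+1+b) M / (M.factorial : ℝ)) := by
      rw [Finset.sum_range_succ']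
      simp only [Nat.cast_zero, zero_mul, add_zero]
      rw [← ih (a+1) b, Finset.mul_sum]
      apply Finset.sum_congr rfl
      intro y _
      have hfac : ((y+1).factorial : ℝ) = ((y:ℝ)+1) * (y.factorial : ℝ) := by
        rw [Nat.factorial_succ]; push_cast; ring
      have hsub : M + 1 - (y+1) = M - y := by omega
      rw [hsub, poch_succ', hfac]
      have h1 : ((y:ℝ)+1) ≠ 0 := by positivity
      have h2 : (y.factorial : ℝ) ≠ 0 := by positivity
      field_simp
      push_cast; ring
    have e2 : (∑ y ∈ Finset.range (M+2), ((M+1-y : ℕ):ℝ) * (poch a y / (y.factorial : ℝ) * (poch b (M+1-y) / ((M+1-y).factorial : ℝ))))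
        = b * (poch (a+(b+1)) M / (M.factorial : ℝ)) := by
      rw [Finset.sum_range_succ]
      simp only [Nat.sub_self, Nat.cast_zero, zero_mul, add_zero]
      rw [← ih a (b+1), Finset.mul_sum]
      apply Finset.sum_congr rfl
      intro y hy
      have hy' : y ≤ M := by simpa [Nat.lt_succ_iff] using Finset.mem_range.mp hy
      have hsub : M + 1 - y = (M - y) + 1 := by omega
      have hfac : (((M-y)+1).factorial : ℝ) = ((((M-y):ℕ):ℝ)+1) * ((M-y).factorial : ℝ) := by
        rw [Nat.factorial_succ]; push_cast; ring
      rw [hsub, poch_succ', hfac]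
      have hcast : ((M - y + 1 : ℕ):ℝ) = ((M-y : ℕ):ℝ) + 1 := by push_cast; ring
      rw [hcast]
      have h1 : ((M-y:ℕ):ℝ)+1 ≠ 0 := by positivity
      have h2 : ((M-y).factorial : ℝ) ≠ 0 := by positivity
      have gen : ∀ (c A P F : ℝ), F ≠ 0 → c+1 ≠ 0 →
          (c+1) * (A * (b*P/((c+1)*F))) = b*(A*(P/F)) := by
        intros c A P F hF hc; field_simp
      exact gen _ _ _ _ h2 h1
    have e3 : poch (a+b) (M+1) = (a+b) * poch (a+b+1) M := by
      rw [poch_succ']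
    have hM1 : ((M:ℝ)+1) ≠ 0 := by positivity
    have hfacM : ((M+1).factorial : ℝ) = ((M:ℝ)+1) * (M.factorial : ℝ) := by
      rw [Nat.factorial_succ]; push_cast; ring
    have hfac' : (M.factorial : ℝ) ≠ 0 := by positivity
    rw [e1, e2] at key
    have : ((M:ℝ)+1) * (poch (a+b) (M+1) / ((M+1).factorial : ℝ))
        = a * (poch (a+1+b) M / (M.factorial : ℝ)) + b * (poch (a+(b+1)) M / (M.factorial : ℝ)) := by
      rw [e3, hfacM]
      have : a+1+b = a+b+1 := by ring
      rw [this]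
      have : a+(b+1) = a+b+1 := by ring
      rw [this]
      field_simp
    rw [← this] at key
    exact mul_left_cancel₀ hM1 key

noncomputable def hco (n : ℕ) (α β : ℝ) (m : ℕ) (k : ℕ) : ℝ :=
  poch (-(n:ℝ)) k * poch ((n:ℝ)+α+β+1) k / ((k.factorial:ℝ) * poch (α+1) k * poch (-(m:ℝ)) k)

lemma hahnQ_eq (n : ℕ) (x α β : ℝ) (m : ℕ) :
    hahnQ n x α β m = ∑ k ∈ Finset.range (n+1), hco n α β m k * poch (-x) k := by
  apply Finset.sum_congr rfl
  intro k _
  rw [hco]; ring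

lemma hco_zero (n : ℕ) (α β : ℝ) (m : ℕ) : hco n α β m 0 = 1 := by
  simp [hco, poch_zero]

lemma hco_eq_zero {m k : ℕ} (h : m < k) (n : ℕ) (α β : ℝ) : hco n α β m k = 0 := by
  rw [hco, poch_neg_nat_zero h]
  simp

lemma poch_diff (x : ℝ) (k : ℕ) :
    poch (-(x+1)) (k+1) - poch (-x) (k+1) = -((k:ℝ)+1) * poch (-x) k := by
  rw [poch_succ' (-(x+1)), show (-(x+1)+1 : ℝ) = -x by ring, poch_succ]
  ring

lemma FS_coeff (n m' k : ℕ) (α β : ℝ) (hα : -1 < α) :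
    (-((k:ℝ)+1)) * hco (n+1) α β (m'+1) (k+1)
      = -(((n:ℝ)+1)*((n:ℝ)+α+β+2)/((α+1)*((m':ℝ)+1))) * hco n (α+1) (β+1) m' k := by
  by_cases hk : k ≤ m'
  · rw [hco, hco]
    rw [show (-(((n:ℕ)+1 : ℕ):ℝ)) = -((n:ℝ)+1) by push_cast; ring]
    rw [show ((((n:ℕ)+1 : ℕ):ℝ)+α+β+1) = (n:ℝ)+α+β+2 by push_cast; ring]
    rw [show (-(((m':ℕ)+1 : ℕ):ℝ)) = -((m':ℝ)+1) by push_cast; ring]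
    rw [show ((n:ℝ)+(α+1)+(β+1)+1) = ((n:ℝ)+α+β+2)+1 by ring]
    rw [show ((α+1)+1 : ℝ) = α+2 by ring]
    rw [poch_succ' (-((n:ℝ)+1)), show (-((n:ℝ)+1)+1) = -(n:ℝ) by ring]
    rw [poch_succ' ((n:ℝ)+α+β+2)]
    rw [poch_succ' (α+1), show ((α+1)+1 : ℝ) = α+2 by ring]
    rw [poch_succ' (-((m':ℝ)+1)), show (-((m':ℝ)+1)+1) = -(m':ℝ) by ring]
    rw [show ((k+1).factorial : ℝ) = ((k:ℝ)+1) * (k.factorial : ℝ) by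
      rw [Nat.factorial_succ]; push_cast; ring]
    have h1 : (k.factorial : ℝ) ≠ 0 := by positivity
    have h2 : poch (α+2) k ≠ 0 := ne_of_gt (poch_pos (by linarith) k)
    have h3 : poch (-(m':ℝ)) k ≠ 0 := poch_neg_nat_ne_zero hk
    have h4 : (α+1 : ℝ) ≠ 0 := by linarith
    have h5 : ((m':ℝ)+1) ≠ 0 := by positivity
    have h6 : ((k:ℝ)+1) ≠ 0 := by positivity
    have aux : ∀ (A B F C D k1 nn cc a1 mm : ℝ), F ≠ 0 → C ≠ 0 → D ≠ 0 → a1 ≠ 0 → mm ≠ 0 → k1 ≠ 0 →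
        -k1 * ((-nn)*A * (cc*B)) / (k1*F * (a1*C) * ((-mm)*D)) = -(nn*cc/(a1*mm)) * (A*B/(F*C*D)) := by
      intros A B F C D k1 nn cc a1 mm hF hC hD ha hm hk
      field_simp
    have := aux (poch (-(n:ℝ)) k) (poch ((n:ℝ)+α+β+2+1) k) (k.factorial : ℝ) (poch (α+2) k)
      (poch (-(m':ℝ)) k) ((k:ℝ)+1) ((n:ℝ)+1) ((n:ℝ)+α+β+2) (α+1) ((m':ℝ)+1) h1 h2 h3 h4 h5 h6
    rw [mul_div_assoc] at this
    exact this
  · rw [hco_eq_zero (by omega) (n+1) α β, hco_eq_zero (by omega) n (α+1) (β+1)]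
    ring

lemma FS (n m' : ℕ) (α β : ℝ) (hα : -1 < α) (x : ℝ) :
    hahnQ (n+1) (x+1) α β (m'+1) - hahnQ (n+1) x α β (m'+1)
      = -(((n:ℝ)+1)*((n:ℝ)+α+β+2)/((α+1)*((m':ℝ)+1))) * hahnQ n x (α+1) (β+1) m' := by
  rw [hahnQ_eq, hahnQ_eq, hahnQ_eq, ← Finset.sum_sub_distrib, Finset.mul_sum]
  rw [Finset.sum_range_succ']
  simp only [poch_zero, mul_one, sub_self, add_zero]
  apply Finset.sum_congr rfl
  intro k _
  have hd : hco (n+1) α β (m'+1) (k+1) * poch (-(x+1)) (k+1)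
      - hco (n+1) α β (m'+1) (k+1) * poch (-x) (k+1)
      = ((-((k:ℝ)+1)) * hco (n+1) α β (m'+1) (k+1)) * poch (-x) k := by
    rw [show hco (n+1) α β (m'+1) (k+1) * poch (-(x+1)) (k+1)
      - hco (n+1) α β (m'+1) (k+1) * poch (-x) (k+1)
      = hco (n+1) α β (m'+1) (k+1) * (poch (-(x+1)) (k+1) - poch (-x) (k+1)) by ring]
    rw [poch_diff]; ring
  rw [hd, FS_coeff n m' k α β hα]
  ring

lemma Ek (α β : ℝ) (m : ℕ) (x : ℝ) (k' : ℕ) :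
    (x+α+1)*(x-(m:ℝ))*(poch (-(x+1)) (k'+1) - poch (-x) (k'+1))
      + x*(x-β-(m:ℝ)-1)*(poch (-(x-1)) (k'+1) - poch (-x) (k'+1))
    = ((k':ℝ)+1)*((k':ℝ)+α+β+2) * poch (-x) (k'+1)
      + ((k':ℝ)+1)*((m:ℝ)-(k':ℝ))*(α+(k':ℝ)+1) * poch (-x) k' := by
  rw [show (-(x-1) : ℝ) = -x+1 by ring]
  have e1 : poch (-(x+1)) (k'+1) = (-(x+1)) * poch (-x) k' := by
    rw [poch_succ', show (-(x+1)+1 : ℝ) = -x by ring]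
  have e2 : poch (-x) (k'+1) = poch (-x) k' * (-x + k') := poch_succ _ _
  have e3 : poch (-x+1) (k'+1) = poch (-x+1) k' * (-x+1+k') := poch_succ _ _
  have e4 : x * poch (-x+1) k' = -(poch (-x) k' * (-x + (k':ℝ))) := by
    have h := poch_succ' (-x) k'
    have h2 := poch_succ (-x) k'
    linear_combination h - h2
  rw [e1, e2, e3]
  linear_combination ((x-β-(m:ℝ)-1)*(-x+1+(k':ℝ)))*e4

lemma KC (n m k : ℕ) (α β : ℝ) (hα : -1 < α) (hk : k < n) (hnm : n ≤ m) :
    ((k:ℝ)+1)*((m:ℝ)-(k:ℝ))*(α+(k:ℝ)+1) * hco n α β m (k+1)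
      = ((n:ℝ)*((n:ℝ)+α+β+1) - (k:ℝ)*((k:ℝ)+α+β+1)) * hco n α β m k := by
  unfold hco
  rw [poch_succ (-(n:ℝ)), poch_succ ((n:ℝ)+α+β+1), poch_succ (α+1), poch_succ (-(m:ℝ))]
  rw [show ((k+1).factorial : ℝ) = ((k:ℝ)+1) * (k.factorial : ℝ) by
    rw [Nat.factorial_succ]; push_cast; ring]
  have h1 : (k.factorial : ℝ) ≠ 0 := by positivity
  have h2 : poch (α+1) k ≠ 0 := ne_of_gt (poch_pos (by linarith) k)
  have h3 : poch (-(m:ℝ)) k ≠ 0 := poch_neg_nat_ne_zero (by omega)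
  have h4 : (α+1+(k:ℝ)) ≠ 0 := by
    have : (0:ℝ) ≤ (k:ℝ) := Nat.cast_nonneg k
    intro hc; linarith
  have h5 : (-(m:ℝ)+(k:ℝ)) ≠ 0 := by
    have : (k:ℝ) < (m:ℝ) := by exact_mod_cast (by omega : k < m)
    linarith
  have h6 : ((k:ℝ)+1) ≠ 0 := by positivity
  have aux : ∀ A B F C D : ℝ, F ≠ 0 → C ≠ 0 → D ≠ 0 →
      ((k:ℝ)+1)*((m:ℝ)-(k:ℝ))*(α+(k:ℝ)+1) *
        (A*(-(n:ℝ)+(k:ℝ)) * (B*((n:ℝ)+α+β+1+(k:ℝ))) / (((k:ℝ)+1)*F * (C*(α+1+(k:ℝ))) * (D*(-(m:ℝ)+(k:ℝ)))))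
      = ((n:ℝ)*((n:ℝ)+α+β+1) - (k:ℝ)*((k:ℝ)+α+β+1)) * (A*B/(F*C*D)) := by
    intro A B F C D hF hC hD
    field_simp
    ring
  exact aux _ _ _ _ _ h1 h2 h3

lemma DEQ (n m : ℕ) (α β : ℝ) (hα : -1 < α) (hnm : n ≤ m) (x : ℝ) :
    (x+α+1)*(x-(m:ℝ))*(hahnQ n (x+1) α β m - hahnQ n x α β m)
      + x*(x-β-(m:ℝ)-1)*(hahnQ n (x-1) α β m - hahnQ n x α β m)
    = (n:ℝ)*((n:ℝ)+α+β+1) * hahnQ n x α β m := by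
  rw [hahnQ_eq, hahnQ_eq, hahnQ_eq]
  set g : ℕ → ℝ := fun k =>
    ((n:ℝ)*((n:ℝ)+α+β+1) - (k:ℝ)*((k:ℝ)+α+β+1)) * hco n α β m k * poch (-x) k with hg
  have lhs_eq : (x+α+1)*(x-(m:ℝ))*((∑ k ∈ Finset.range (n+1), hco n α β m k * poch (-(x+1)) k)
        - ∑ k ∈ Finset.range (n+1), hco n α β m k * poch (-x) k)
      + x*(x-β-(m:ℝ)-1)*((∑ k ∈ Finset.range (n+1), hco n α β m k * poch (-(x-1)) k)
        - ∑ k ∈ Finset.range (n+1), hco n α β m k * poch (-x) k)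
      = ∑ k ∈ Finset.range (n+1), hco n α β m k *
          ((x+α+1)*(x-(m:ℝ))*(poch (-(x+1)) k - poch (-x) k)
            + x*(x-β-(m:ℝ)-1)*(poch (-(x-1)) k - poch (-x) k)) := by
    rw [← Finset.sum_sub_distrib, ← Finset.sum_sub_distrib, Finset.mul_sum, Finset.mul_sum,
      ← Finset.sum_add_distrib]
    apply Finset.sum_congr rfl
    intro k _
    ring
  rw [lhs_eq, Finset.mul_sum]
  rw [Finset.sum_range_succ' (fun k => hco n α β m k *
        ((x+α+1)*(x-(m:ℝ))*(poch (-(x+1)) k - poch (-x) k)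
          + x*(x-β-(m:ℝ)-1)*(poch (-(x-1)) k - poch (-x) k))) n]
  rw [Finset.sum_range_succ' (fun k => (n:ℝ)*((n:ℝ)+α+β+1) * (hco n α β m k * poch (-x) k)) n]
  simp only [poch_zero, hco_zero, Nat.cast_zero, mul_one, one_mul, sub_self, mul_zero, add_zero]
  have key : ∀ k ∈ Finset.range n,
      hco n α β m (k+1) * ((x+α+1)*(x-(m:ℝ))*(poch (-(x+1)) (k+1) - poch (-x) (k+1))
        + x*(x-β-(m:ℝ)-1)*(poch (-(x-1)) (k+1) - poch (-x) (k+1)))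
      = (n:ℝ)*((n:ℝ)+α+β+1) * (hco n α β m (k+1) * poch (-x) (k+1)) + (g k - g (k+1)) := by
    intro k hk
    rw [Ek α β m x k]
    have hkc := KC n m k α β hα (Finset.mem_range.mp hk) hnm
    rw [hg]
    simp only [Nat.cast_add, Nat.cast_one]
    linear_combination (poch (-x) k) * hkc
  rw [Finset.sum_congr rfl key, Finset.sum_add_distrib, Finset.sum_range_sub' g n]
  have hg0 : g 0 = (n:ℝ)*((n:ℝ)+α+β+1) := by
    simp [hg, hco_zero, poch_zero]
  have hgn : g n = 0 := by
    simp [hg]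
  rw [hg0, hgn]
  ring

lemma hahnW_pos {α β : ℝ} (hα : -1 < α) (hβ : -1 < β) (x m : ℕ) : 0 < hahnW x α β m := by
  unfold hahnW
  have h1 : 0 < poch (α+1) x := poch_pos (by linarith) x
  have h2 : 0 < poch (β+1) (m-x) := poch_pos (by linarith) (m-x)
  have h3 : (0:ℝ) < x.factorial := by positivity
  have h4 : (0:ℝ) < (m-x).factorial := by positivity
  positivity

lemma waux : ∀ (P Pp Q F G M c1 c2 t : ℝ), F≠0 → G≠0 → M≠0 → (P * t = c1 * Pp) →
    (P/F) * (c2*Q/(M*G)) * (t*M) = c1*c2*(Pp/F * (Q/G)) := by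
  intro P Pp Q F G M c1 c2 t hF hG hM h
  field_simp
  linear_combination (c2*Q)*h

lemma wB (x m' : ℕ) (α β : ℝ) (hx : x ≤ m') :
    hahnW x α β (m'+1) * (((x:ℝ)+α+1) * (((m':ℝ)+1) - (x:ℝ)))
      = (α+1)*(β+1) * hahnW x (α+1) (β+1) m' := by
  unfold hahnW
  have hsub : m' + 1 - x = (m' - x) + 1 := by omega
  rw [hsub, poch_succ' (β+1) (m'-x)]
  have hcm : ((m'-x:ℕ):ℝ) = (m':ℝ) - (x:ℝ) := by
    push_cast [Nat.cast_sub hx]; ring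
  rw [show (((m'-x)+1).factorial : ℝ) = (((m':ℝ)-(x:ℝ))+1) * (((m'-x).factorial:ℕ) : ℝ) by
    rw [Nat.factorial_succ]; push_cast [Nat.cast_sub hx]; ring]
  rw [show ((m':ℝ)+1) - (x:ℝ) = ((m':ℝ)-(x:ℝ))+1 by ring]
  have e1 : poch (α+1) x * ((x:ℝ)+α+1) = (α+1) * poch (α+1+1) x := by
    have h := poch_succ (α+1) x
    have h2 := poch_succ' (α+1) x
    linear_combination h2 - h
  have h3 : ((x.factorial) : ℝ) ≠ 0 := by positivity
  have h4 : (((m'-x).factorial) : ℝ) ≠ 0 := by positivity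
  have h5 : ((m':ℝ)-(x:ℝ))+1 ≠ 0 := by
    have : (x:ℝ) ≤ (m':ℝ) := by exact_mod_cast hx
    intro hcc; linarith
  exact waux _ _ _ _ _ _ _ _ _ h3 h4 h5 e1

lemma wD (x m' : ℕ) (α β : ℝ) (hx : x ≤ m') :
    hahnW (x+1) α β (m'+1) * (((x:ℝ)+1) * (((x:ℝ)+1) - β - ((m':ℝ)+1) - 1))
      = hahnW x α β (m'+1) * (((x:ℝ)+α+1) * ((x:ℝ) - ((m':ℝ)+1))) := by
  unfold hahnW
  have h1 : m'+1-(x+1) = m'-x := by omega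
  have h2 : m'+1-x = (m'-x)+1 := by omega
  rw [h1, h2, poch_succ (β+1) (m'-x), poch_succ (α+1) x]
  rw [show (((x:ℕ)+1).factorial : ℝ) = (((x:ℕ):ℝ)+1) * ((x.factorial:ℕ) : ℝ) by
    rw [Nat.factorial_succ]; push_cast; ring]
  rw [show (((m'-x)+1).factorial : ℝ) = (((m'-x:ℕ):ℝ)+1) * (((m'-x).factorial:ℕ) : ℝ) by
    rw [Nat.factorial_succ]; push_cast; ring]
  have hc : ((m'-x:ℕ):ℝ) = (m':ℝ) - (x:ℝ) := by
    push_cast [Nat.cast_sub hx]; ring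
  rw [hc]
  have h3 : ((x.factorial) : ℝ) ≠ 0 := by positivity
  have h4 : (((m'-x).factorial) : ℝ) ≠ 0 := by positivity
  have h5 : ((m':ℝ) - (x:ℝ))+1 ≠ 0 := by
    have : (x:ℝ) ≤ (m':ℝ) := by exact_mod_cast hx
    intro hcc; linarith
  have h6 : ((x:ℝ)+1) ≠ 0 := by positivity
  field_simp
  ring

lemma SYM (m' : ℕ) (α β : ℝ) (f g : ℕ → ℝ) :
    ∑ x ∈ Finset.range (m'+2), hahnW x α β (m'+1) *
      (((x:ℝ)+α+1)*((x:ℝ)-((m':ℝ)+1))*(f (x+1) - f x)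
        + (x:ℝ)*((x:ℝ)-β-((m':ℝ)+1)-1)*(f (x-1) - f x)) * g x
    = -∑ x ∈ Finset.range (m'+1), hahnW x α β (m'+1) *
        (((x:ℝ)+α+1)*((x:ℝ)-((m':ℝ)+1))) * (f (x+1) - f x) * (g (x+1) - g x) := by
  have e : ∀ x ∈ Finset.range (m'+2), hahnW x α β (m'+1) *
      (((x:ℝ)+α+1)*((x:ℝ)-((m':ℝ)+1))*(f (x+1) - f x)
        + (x:ℝ)*((x:ℝ)-β-((m':ℝ)+1)-1)*(f (x-1) - f x)) * g x
      = hahnW x α β (m'+1) * (((x:ℝ)+α+1)*((x:ℝ)-((m':ℝ)+1))) * (f (x+1) - f x) * g x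
        + hahnW x α β (m'+1) * ((x:ℝ)*((x:ℝ)-β-((m':ℝ)+1)-1)) * (f (x-1) - f x) * g x := by
    intro x _; ring
  rw [Finset.sum_congr rfl e, Finset.sum_add_distrib]
  have s1 : ∑ x ∈ Finset.range (m'+2),
      hahnW x α β (m'+1) * (((x:ℝ)+α+1)*((x:ℝ)-((m':ℝ)+1))) * (f (x+1) - f x) * g x
      = ∑ x ∈ Finset.range (m'+1),
      hahnW x α β (m'+1) * (((x:ℝ)+α+1)*((x:ℝ)-((m':ℝ)+1))) * (f (x+1) - f x) * g x := by
    rw [Finset.sum_range_succ]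
    rw [show (((m'+1:ℕ):ℝ)) = (m':ℝ)+1 by push_cast; ring, sub_self]
    simp
  have s2 : ∑ x ∈ Finset.range (m'+2),
      hahnW x α β (m'+1) * ((x:ℝ)*((x:ℝ)-β-((m':ℝ)+1)-1)) * (f (x-1) - f x) * g x
      = ∑ x ∈ Finset.range (m'+1),
      hahnW x α β (m'+1) * (((x:ℝ)+α+1)*((x:ℝ)-((m':ℝ)+1))) * (f x - f (x+1)) * g (x+1) := by
    rw [Finset.sum_range_succ']
    simp only [Nat.cast_zero, zero_mul, mul_zero, zero_sub, neg_zero, add_zero]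
    have : ∀ x ∈ Finset.range (m'+1),
        hahnW (x+1) α β (m'+1) * (((x+1:ℕ):ℝ)*(((x+1:ℕ):ℝ)-β-((m':ℝ)+1)-1)) * (f ((x+1)-1) - f (x+1)) * g (x+1)
        = hahnW x α β (m'+1) * (((x:ℝ)+α+1)*((x:ℝ)-((m':ℝ)+1))) * (f x - f (x+1)) * g (x+1) := by
      intro x hx
      have hx' : x ≤ m' := by
        have := Finset.mem_range.mp hx; omega
      have hwd := wD x m' α β hx'
      have hc : ((x+1:ℕ):ℝ) = (x:ℝ)+1 := by push_cast; ring
      rw [hc, show (x+1)-1 = x from rfl]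
      linear_combination ((f x - f (x+1)) * g (x+1)) * hwd
    rw [Finset.sum_congr rfl this]
  rw [s1, s2, ← Finset.sum_add_distrib, ← Finset.sum_neg_distrib]
  apply Finset.sum_congr rfl
  intro x _
  ring

noncomputable def hS (l n : ℕ) (α β : ℝ) (m : ℕ) : ℝ :=
  ∑ x ∈ Finset.range (m+1), hahnW x α β m * hahnQ l (x:ℝ) α β m * hahnQ n (x:ℝ) α β m

lemma bracket (n m : ℕ) (α β : ℝ) (hα : -1 < α) (hnm : n ≤ m) (x : ℕ) :
    ((x:ℝ)+α+1)*((x:ℝ)-(m:ℝ))*(hahnQ n ((x:ℝ)+1) α β m - hahnQ n (x:ℝ) α β m)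
      + (x:ℝ)*((x:ℝ)-β-(m:ℝ)-1)*(hahnQ n (((x-1:ℕ):ℕ):ℝ) α β m - hahnQ n (x:ℝ) α β m)
    = (n:ℝ)*((n:ℝ)+α+β+1) * hahnQ n (x:ℝ) α β m := by
  cases x with
  | zero =>
    have h := DEQ n m α β hα hnm 0
    simp only [zero_add, zero_mul, add_zero, zero_sub] at h ⊢
    simpa using h
  | succ y =>
    have h := DEQ n m α β hα hnm ((y:ℝ)+1)
    rw [show ((y:ℝ)+1)-1 = (y:ℝ) by ring] at h
    have hc : (((y+1:ℕ)):ℝ) = (y:ℝ)+1 := by push_cast; ring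
    rw [show (y+1)-1 = y from rfl, hc]
    exact h

lemma hS_sbp (l n m' : ℕ) (α β : ℝ) (hα : -1 < α) (hl : l ≤ m'+1) :
    (l:ℝ)*((l:ℝ)+α+β+1) * hS l n α β (m'+1)
    = -∑ x ∈ Finset.range (m'+1), hahnW x α β (m'+1) *
        (((x:ℝ)+α+1)*((x:ℝ)-((m':ℝ)+1)))
        * (hahnQ l ((x+1:ℕ):ℝ) α β (m'+1) - hahnQ l (x:ℝ) α β (m'+1))
        * (hahnQ n ((x+1:ℕ):ℝ) α β (m'+1) - hahnQ n (x:ℝ) α β (m'+1)) := by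
  have key := SYM m' α β (fun x => hahnQ l (x:ℝ) α β (m'+1)) (fun x => hahnQ n (x:ℝ) α β (m'+1))
  rw [← key, hS, Finset.mul_sum]
  apply Finset.sum_congr rfl
  intro x _
  have hb := bracket l (m'+1) α β hα hl x
  rw [show (((m'+1:ℕ)):ℝ) = (m':ℝ)+1 by push_cast; ring] at hb
  have hc : (((x+1:ℕ)):ℝ) = (x:ℝ)+1 := by push_cast; ring
  rw [hc]
  linear_combination (-(hahnQ n (x:ℝ) α β (m'+1) * hahnW x α β (m'+1))) * hb

lemma hS_comm (l n m : ℕ) (α β : ℝ) : hS l n α β m = hS n l α β m := by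
  unfold hS
  apply Finset.sum_congr rfl
  intro x _
  ring

lemma ortho_ne (l n m : ℕ) (α β : ℝ) (hα : -1 < α) (hc : 0 < α+β+1)
    (hl : l ≤ m) (hn : n ≤ m) (hln : l ≠ n) : hS l n α β m = 0 := by
  cases m with
  | zero => omega
  | succ m' =>
    have h1 := hS_sbp l n m' α β hα hl
    have h2 := hS_sbp n l m' α β hα hn
    rw [hS_comm n l] at h2
    have hsym : (∑ x ∈ Finset.range (m'+1), hahnW x α β (m'+1) *
        (((x:ℝ)+α+1)*((x:ℝ)-((m':ℝ)+1)))
        * (hahnQ l ((x+1:ℕ):ℝ) α β (m'+1) - hahnQ l (x:ℝ) α β (m'+1))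
        * (hahnQ n ((x+1:ℕ):ℝ) α β (m'+1) - hahnQ n (x:ℝ) α β (m'+1)))
        = ∑ x ∈ Finset.range (m'+1), hahnW x α β (m'+1) *
        (((x:ℝ)+α+1)*((x:ℝ)-((m':ℝ)+1)))
        * (hahnQ n ((x+1:ℕ):ℝ) α β (m'+1) - hahnQ n (x:ℝ) α β (m'+1))
        * (hahnQ l ((x+1:ℕ):ℝ) α β (m'+1) - hahnQ l (x:ℝ) α β (m'+1)) := by
      apply Finset.sum_congr rfl
      intro x _
      ring
    rw [hsym] at h1
    have hdiff : ((l:ℝ)*((l:ℝ)+α+β+1) - (n:ℝ)*((n:ℝ)+α+β+1)) * hS l n α β (m'+1) = 0 := by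
      rw [sub_mul, h1, h2]
      ring
    have hne : ((l:ℝ)*((l:ℝ)+α+β+1) - (n:ℝ)*((n:ℝ)+α+β+1)) ≠ 0 := by
      have hfac : ((l:ℝ)*((l:ℝ)+α+β+1) - (n:ℝ)*((n:ℝ)+α+β+1))
          = ((l:ℝ)-(n:ℝ)) * ((l:ℝ)+(n:ℝ)+α+β+1) := by ring
      rw [hfac]
      apply mul_ne_zero
      · have : (l:ℝ) ≠ (n:ℝ) := by exact_mod_cast hln
        intro hcc; apply this; linarith
      · have h0 : (0:ℝ) ≤ (l:ℝ) := Nat.cast_nonneg l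
        have h0' : (0:ℝ) ≤ (n:ℝ) := Nat.cast_nonneg n
        intro hcc; linarith
    exact (mul_eq_zero.mp hdiff).resolve_left hne

lemma hahnQ_zero_deg (x α β : ℝ) (m : ℕ) : hahnQ 0 x α β m = 1 := by
  simp [hahnQ, poch_zero]

lemma hS00 (α β : ℝ) (m : ℕ) (hab : α+β+1 ≠ 0) : hS 0 0 α β m = hahnH 0 α β m := by
  unfold hS
  simp only [hahnQ_zero_deg, mul_one]
  have hv := vdm m (α+1) (β+1)
  unfold hahnW
  rw [show ((α+1)+(β+1) : ℝ) = α+β+2 by ring] at hv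
  rw [hv]
  unfold hahnH
  simp only [pow_zero, Nat.cast_zero, poch_zero, one_mul, mul_one, Nat.factorial_zero,
    Nat.cast_one]
  rw [show ((0:ℝ)+α+β+1) = α+β+1 by ring, show (2*(0:ℝ)+α+β+1) = α+β+1 by ring]
  rw [poch_succ' (α+β+1) m, show ((α+β+1)+1 : ℝ) = α+β+2 by ring]
  have hm : (m.factorial : ℝ) ≠ 0 := by positivity
  field_simp

set_option maxHeartbeats 1600000 in
lemma Hrec (n m' : ℕ) (α β : ℝ) (hα : -1 < α) (hβ : -1 < β) (hab : 0 < α+β+1)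
    (hn : n ≤ m') :
    hahnH (n+1) α β (m'+1)
      = ((β+1)*((n:ℝ)+1)*((n:ℝ)+α+β+2)/((α+1)*((m':ℝ)+1)*((m':ℝ)+1)))
        * hahnH n (α+1) (β+1) m' := by
  unfold hahnH
  rw [show (((n+1:ℕ)):ℝ) = (n:ℝ)+1 by push_cast; ring]
  rw [show (((m'+1:ℕ)):ℝ) = (m':ℝ)+1 by push_cast; ring]
  rw [show ((n:ℝ)+1+α+β+1) = (n:ℝ)+α+β+2 by ring]
  rw [show ((n:ℝ)+(α+1)+(β+1)+1) = (n:ℝ)+α+β+2+1 by ring]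
  rw [show (2*((n:ℝ)+1)+α+β+1) = 2*(n:ℝ)+(α+1)+(β+1)+1 by ring]
  rw [poch_succ' ((n:ℝ)+α+β+2) (m'+1)]
  rw [pow_succ]
  rw [poch_succ' (β+1) n]
  rw [poch_succ' (α+1) n]
  rw [poch_succ' (-((m':ℝ)+1)) n, show (-((m':ℝ)+1)+1) = -(m':ℝ) by ring]
  rw [show (((n+1).factorial:ℕ) : ℝ) = ((n:ℝ)+1) * ((n.factorial:ℕ):ℝ) by
    rw [Nat.factorial_succ]; push_cast; ring]
  rw [show (((m'+1).factorial:ℕ) : ℝ) = ((m':ℝ)+1) * ((m'.factorial:ℕ):ℝ) by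
    rw [Nat.factorial_succ]; push_cast; ring]
  have h1 : (n.factorial : ℝ) ≠ 0 := by positivity
  have h2 : (m'.factorial : ℝ) ≠ 0 := by positivity
  have h3 : poch ((α+1)+1) n ≠ 0 := ne_of_gt (poch_pos (by linarith) n)
  have h4 : poch (-(m':ℝ)) n ≠ 0 := poch_neg_nat_ne_zero hn
  have h5 : (α+1 : ℝ) ≠ 0 := by linarith
  have h6 : ((m':ℝ)+1) ≠ 0 := by positivity
  have h7 : (2*(n:ℝ)+(α+1)+(β+1)+1) ≠ 0 := by
    have : (0:ℝ) ≤ (n:ℝ) := Nat.cast_nonneg n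
    intro hcc; linarith
  have aux : ∀ (s P1 P2 P3 P4 : ℝ), P3 ≠ 0 → P4 ≠ 0 →
      ((s*(-1)) * (((n:ℝ)+α+β+2) * P1) * ((β+1)*P2) * (((n:ℝ)+1)*(n.factorial:ℝ)))
        / ((2*(n:ℝ)+(α+1)+(β+1)+1) * ((α+1)*P3) * ((-((m':ℝ)+1))*P4) * (((m':ℝ)+1)*(m'.factorial:ℝ)))
      = ((β+1)*((n:ℝ)+1)*((n:ℝ)+α+β+2)/((α+1)*((m':ℝ)+1)*((m':ℝ)+1)))
        * ((s * P1 * P2 * (n.factorial:ℝ))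
          / ((2*(n:ℝ)+(α+1)+(β+1)+1) * P3 * P4 * (m'.factorial:ℝ))) := by
    intro s P1 P2 P3 P4 hP3 hP4
    have hB : ((2*(n:ℝ)+(α+1)+(β+1)+1) * ((α+1)*P3) * ((-((m':ℝ)+1))*P4) * (((m':ℝ)+1)*(m'.factorial:ℝ))) ≠ 0 := by
      apply mul_ne_zero
      apply mul_ne_zero
      apply mul_ne_zero h7
      exact mul_ne_zero h5 hP3
      exact mul_ne_zero (neg_ne_zero.mpr h6) hP4
      exact mul_ne_zero h6 h2
    have hD : ((α+1)*((m':ℝ)+1)*((m':ℝ)+1)) * ((2*(n:ℝ)+(α+1)+(β+1)+1) * P3 * P4 * (m'.factorial:ℝ)) ≠ 0 := by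
      apply mul_ne_zero
      exact mul_ne_zero (mul_ne_zero h5 h6) h6
      apply mul_ne_zero
      apply mul_ne_zero
      exact mul_ne_zero h7 hP3
      exact hP4
      exact h2
    rw [div_mul_div_comm, div_eq_div_iff hB hD]
    ring
  exact aux _ _ _ (poch ((α+1)+1) n) _ h3 h4

lemma hahnH_pos (n m : ℕ) (α β : ℝ) (hα : -1 < α) (hβ : -1 < β) (hab : 0 < α+β+1)
    (hn : n ≤ m) : 0 < hahnH n α β m := by
  unfold hahnH
  rw [poch_neg_nat_eq m n hn]
  have ht : ((-1:ℝ)^n) * ((-1:ℝ)^n) = 1 := by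
    rw [← pow_add]
    exact Even.neg_one_pow ⟨n, rfl⟩
  have ht' : ((-1:ℝ)^n) ≠ 0 := by
    intro hcc
    rw [hcc, mul_zero] at ht
    norm_num at ht
  have hrw : ((2*(n:ℝ)+α+β+1) * poch (α+1) n * ((-1:ℝ)^n * (m.factorial:ℝ) / ((m-n).factorial:ℝ)) * (m.factorial:ℝ))
      = ((-1:ℝ)^n) * ((2*(n:ℝ)+α+β+1) * poch (α+1) n * ((m.factorial:ℝ) / ((m-n).factorial:ℝ)) * (m.factorial:ℝ)) := by
    ring
  rw [hrw, show ((-1:ℝ)^n * poch ((n:ℝ)+α+β+1) (m+1) * poch (β+1) n * (n.factorial:ℝ))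
      = ((-1:ℝ)^n) * (poch ((n:ℝ)+α+β+1) (m+1) * poch (β+1) n * (n.factorial:ℝ)) by ring]
  rw [mul_div_mul_left _ _ ht']
  have hp1 : 0 < poch ((n:ℝ)+α+β+1) (m+1) := by
    apply poch_pos
    have : (0:ℝ) ≤ (n:ℝ) := Nat.cast_nonneg n
    linarith
  have hp2 : 0 < poch (β+1) n := poch_pos (by linarith) n
  have hp3 : 0 < poch (α+1) n := poch_pos (by linarith) n
  have hp4 : (0:ℝ) < 2*(n:ℝ)+α+β+1 := by
    have : (0:ℝ) ≤ (n:ℝ) := Nat.cast_nonneg n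
    linarith
  have hf1 : (0:ℝ) < (n.factorial : ℝ) := by positivity
  have hf2 : (0:ℝ) < (m.factorial : ℝ) := by positivity
  have hf3 : (0:ℝ) < ((m-n).factorial : ℝ) := by positivity
  positivity

lemma hS_diag : ∀ (n : ℕ) (α β : ℝ) (m : ℕ), -1 < α → -1 < β → 0 < α+β+1 → n ≤ m →
    hS n n α β m = hahnH n α β m := by
  intro n
  induction n with
  | zero =>
    intro α β m hα hβ hab hn
    exact hS00 α β m (ne_of_gt hab)
  | succ n ih =>
    intro α β m hα hβ hab hn
    cases m with
    | zero => omega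
    | succ m' =>
      have hn' : n ≤ m' := by omega
      have hsbp := hS_sbp (n+1) (n+1) m' α β hα hn
      have e : ∀ x ∈ Finset.range (m'+1),
          -(hahnW x α β (m'+1) * (((x:ℝ)+α+1)*((x:ℝ)-((m':ℝ)+1)))
            * (hahnQ (n+1) ((x+1:ℕ):ℝ) α β (m'+1) - hahnQ (n+1) (x:ℝ) α β (m'+1))
            * (hahnQ (n+1) ((x+1:ℕ):ℝ) α β (m'+1) - hahnQ (n+1) (x:ℝ) α β (m'+1)))
          = ((α+1)*(β+1)*((((n:ℝ)+1)*((n:ℝ)+α+β+2)/((α+1)*((m':ℝ)+1)))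
              *(((n:ℝ)+1)*((n:ℝ)+α+β+2)/((α+1)*((m':ℝ)+1)))))
            * (hahnW x (α+1) (β+1) m' * hahnQ n (x:ℝ) (α+1) (β+1) m'
                * hahnQ n (x:ℝ) (α+1) (β+1) m') := by
        intro x hx
        have hx' : x ≤ m' := by
          have := Finset.mem_range.mp hx; omega
        have hc : (((x+1:ℕ)):ℝ) = (x:ℝ)+1 := by push_cast; ring
        rw [hc, FS n m' α β hα (x:ℝ)]
        have hwb := wB x m' α β hx'
        linear_combination ((((n:ℝ)+1)*((n:ℝ)+α+β+2)/((α+1)*((m':ℝ)+1)))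
            *(((n:ℝ)+1)*((n:ℝ)+α+β+2)/((α+1)*((m':ℝ)+1)))
            * hahnQ n (x:ℝ) (α+1) (β+1) m' * hahnQ n (x:ℝ) (α+1) (β+1) m') * hwb
      have key : ((n:ℝ)+1)*(((n:ℝ)+1)+α+β+1) * hS (n+1) (n+1) α β (m'+1)
          = ((α+1)*(β+1)*((((n:ℝ)+1)*((n:ℝ)+α+β+2)/((α+1)*((m':ℝ)+1)))
              *(((n:ℝ)+1)*((n:ℝ)+α+β+2)/((α+1)*((m':ℝ)+1)))))
            * hahnH n (α+1) (β+1) m' := by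
        rw [show (((n+1:ℕ)):ℝ) = (n:ℝ)+1 by push_cast; ring] at hsbp
        rw [hsbp, ← Finset.sum_neg_distrib, Finset.sum_congr rfl e, ← Finset.mul_sum]
        have : (∑ x ∈ Finset.range (m'+1), hahnW x (α+1) (β+1) m' * hahnQ n (x:ℝ) (α+1) (β+1) m'
            * hahnQ n (x:ℝ) (α+1) (β+1) m') = hS n n (α+1) (β+1) m' := rfl
        rw [this, ih (α+1) (β+1) m' (by linarith) (by linarith) (by linarith) hn']
      have hHrec := Hrec n m' α β hα hβ hab hn'
      have hlam : ((n:ℝ)+1)*(((n:ℝ)+1)+α+β+1) ≠ 0 := by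
        have h0 : (0:ℝ) ≤ (n:ℝ) := Nat.cast_nonneg n
        apply mul_ne_zero
        · intro hcc; linarith
        · intro hcc; linarith
      apply mul_left_cancel₀ hlam
      rw [key, hHrec]
      have h5 : (α+1 : ℝ) ≠ 0 := by linarith
      have h6 : ((m':ℝ)+1) ≠ 0 := by positivity
      field_simp
      ring

lemma Qt_ortho (l n m : ℕ) (α β : ℝ) (hα : -1 < α) (hβ : -1 < β) (hab : 0 < α+β+1)
    (hl : l ≤ m) (hn : n ≤ m) :
    ∑ x ∈ Finset.range (m+1), hahnQt l x α β m * hahnQt n x α β m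
      = if l = n then 1 else 0 := by
  have hHl := hahnH_pos l m α β hα hβ hab hl
  have hHn := hahnH_pos n m α β hα hβ hab hn
  have e : ∀ x ∈ Finset.range (m+1), hahnQt l x α β m * hahnQt n x α β m
      = (hahnW x α β m * hahnQ l (x:ℝ) α β m * hahnQ n (x:ℝ) α β m)
          / (Real.sqrt (hahnH l α β m) * Real.sqrt (hahnH n α β m)) := by
    intro x _
    unfold hahnQt
    rw [div_mul_div_comm]
    rw [show (Real.sqrt (hahnW x α β m) * hahnQ l (x:ℝ) α β m)
        * (Real.sqrt (hahnW x α β m) * hahnQ n (x:ℝ) α β m)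
        = (Real.sqrt (hahnW x α β m) * Real.sqrt (hahnW x α β m))
          * (hahnQ l (x:ℝ) α β m * hahnQ n (x:ℝ) α β m) by ring]
    rw [Real.mul_self_sqrt (le_of_lt (hahnW_pos hα hβ x m))]
    congr 1
    ring
  rw [Finset.sum_congr rfl e, ← Finset.sum_div]
  have hSdef : (∑ x ∈ Finset.range (m+1),
      hahnW x α β m * hahnQ l (x:ℝ) α β m * hahnQ n (x:ℝ) α β m) = hS l n α β m := rfl
  rw [hSdef]
  by_cases hln : l = n
  · subst hln
    rw [hS_diag l α β m hα hβ hab hl, Real.mul_self_sqrt (le_of_lt hHl), if_pos rfl]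
    exact div_self (ne_of_gt hHl)
  · rw [ortho_ne l n m α β hα hab hl hn hln, if_neg hln]
    exact zero_div _

lemma sum_range_two_mul (N : ℕ) (f : ℕ → ℝ) :
    ∑ x ∈ Finset.range (2*N), f x = ∑ i ∈ Finset.range N, (f (2*i) + f (2*i+1)) := by
  induction N with
  | zero => simp
  | succ N ih =>
    rw [show 2*(N+1) = 2*N+1+1 by ring, Finset.sum_range_succ, Finset.sum_range_succ,
      Finset.sum_range_succ, ih]
    ring

noncomputable def uent (α β : ℝ) (m : ℕ) (r c : ℕ) : ℝ :=
  if r % 2 = 0 then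
    ((-1 : ℝ) ^ (r/2) / Real.sqrt 2) * hahnQt (if c ≤ m then m - c else c - m - 1) (r/2) α β m
  else
    (if c ≤ m then (-1 : ℝ) else 1) * ((-1 : ℝ) ^ (r/2) / Real.sqrt 2)
      * hahnQt (if c ≤ m then m - c else c - m - 1) (r/2) (α + 1) (β - 1) m

lemma hahnU_apply (α β : ℝ) (m : ℕ) (r c : Fin (2*m+2)) :
    hahnU α β m r c = uent α β m (r:ℕ) (c:ℕ) := rfl

lemma uent_even (α β : ℝ) (m : ℕ) (i c : ℕ) :
    uent α β m (2*i) c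
      = ((-1 : ℝ) ^ i / Real.sqrt 2) * hahnQt (if c ≤ m then m - c else c - m - 1) i α β m := by
  unfold uent
  rw [if_pos (by omega : (2*i) % 2 = 0), show (2*i)/2 = i by omega]

lemma uent_odd (α β : ℝ) (m : ℕ) (i c : ℕ) :
    uent α β m (2*i+1) c
      = (if c ≤ m then (-1 : ℝ) else 1) * ((-1 : ℝ) ^ i / Real.sqrt 2)
          * hahnQt (if c ≤ m then m - c else c - m - 1) i (α+1) (β-1) m := by
  unfold uent
  rw [if_neg (by omega : ¬((2*i+1) % 2 = 0)), show (2*i+1)/2 = i by omega]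


end HahnAux

theorem hahnU_orthogonal (m : ℕ) (α β : ℝ) (hα : α > -1) (hβ : β > 0) :
    (hahnU α β m)ᵀ * hahnU α β m = 1 ∧ hahnU α β m * (hahnU α β m)ᵀ = 1 := by
  have hab : 0 < α + β + 1 := by linarith
  have h1 : (hahnU α β m)ᵀ * hahnU α β m = 1 := by
    ext c c'
    rw [Matrix.mul_apply, Matrix.one_apply]
    simp only [Matrix.transpose_apply, hahnU_apply]
    rw [Fin.sum_univ_eq_sum_range (fun r => uent α β m r (c:ℕ) * uent α β m r (c':ℕ)) (2*m+2)]
    have hsum := sum_range_two_mul (m+1) (fun r => uent α β m r (c:ℕ) * uent α β m r (c':ℕ))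
    rw [show 2*(m+1) = 2*m+2 by ring] at hsum
    rw [hsum]
    set jc := if (c:ℕ) ≤ m then m - (c:ℕ) else (c:ℕ) - m - 1 with hjc
    set jc' := if (c':ℕ) ≤ m then m - (c':ℕ) else (c':ℕ) - m - 1 with hjc'
    set sc : ℝ := if (c:ℕ) ≤ m then (-1:ℝ) else 1 with hsc
    set sc' : ℝ := if (c':ℕ) ≤ m then (-1:ℝ) else 1 with hsc'
    have key : ∀ i ∈ Finset.range (m+1),
        uent α β m (2*i) (c:ℕ) * uent α β m (2*i) (c':ℕ)
          + uent α β m (2*i+1) (c:ℕ) * uent α β m (2*i+1) (c':ℕ)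
        = (1/2) * (hahnQt jc i α β m * hahnQt jc' i α β m)
          + (sc*sc'/2) * (hahnQt jc i (α+1) (β-1) m * hahnQt jc' i (α+1) (β-1) m) := by
      intro i _
      rw [uent_even, uent_even, uent_odd, uent_odd, ← hjc, ← hjc', ← hsc, ← hsc']
      have hs2 : Real.sqrt 2 * Real.sqrt 2 = 2 := Real.mul_self_sqrt (by norm_num)
      have hpow : ((-1:ℝ)^i) * ((-1:ℝ)^i) = 1 := by
        rw [← pow_add]
        exact Even.neg_one_pow ⟨i, rfl⟩
      have hh : ((-1:ℝ)^i/Real.sqrt 2) * ((-1:ℝ)^i/Real.sqrt 2) = 1/2 := by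
        rw [div_mul_div_comm, hpow, hs2]
      linear_combination (hahnQt jc i α β m * hahnQt jc' i α β m
        + sc*sc'*(hahnQt jc i (α+1) (β-1) m * hahnQt jc' i (α+1) (β-1) m)) * hh
    rw [Finset.sum_congr rfl key, Finset.sum_add_distrib, ← Finset.mul_sum, ← Finset.mul_sum]
    have hc2 : (c:ℕ) < 2*m+2 := c.isLt
    have hc2' : (c':ℕ) < 2*m+2 := c'.isLt
    have hjcle : jc ≤ m := by rw [hjc]; split <;> omega
    have hjcle' : jc' ≤ m := by rw [hjc']; split <;> omega
    rw [Qt_ortho jc jc' m α β (by linarith) (by linarith) hab hjcle hjcle']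
    rw [Qt_ortho jc jc' m (α+1) (β-1) (by linarith) (by linarith) (by linarith) hjcle hjcle']
    by_cases hcc : c = c'
    · subst hcc
      rw [if_pos rfl, if_pos rfl]
      have : sc * sc' = 1 := by
        rw [hsc, hsc']
        split <;> norm_num
      rw [this]
      norm_num
    · rw [if_neg hcc]
      have hvne : (c:ℕ) ≠ (c':ℕ) := fun h => hcc (Fin.val_injective h)
      by_cases h1 : (c:ℕ) ≤ m <;> by_cases h2 : (c':ℕ) ≤ m
      · have : jc ≠ jc' := by rw [hjc, hjc', if_pos h1, if_pos h2]; omega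
        rw [if_neg this]; ring
      · have hss : sc * sc' = -1 := by rw [hsc, hsc', if_pos h1, if_neg h2]; norm_num
        rw [hss]; split <;> ring
      · have hss : sc * sc' = -1 := by rw [hsc, hsc', if_neg h1, if_pos h2]; norm_num
        rw [hss]; split <;> ring
      · have : jc ≠ jc' := by rw [hjc, hjc', if_neg h1, if_neg h2]; omega
        rw [if_neg this]; ring
  exact ⟨h1, mul_eq_one_comm.mp h1⟩
end

section
/- When β = α+1, the eigenvalues of the interaction matrix M with couplings J_k = √((k+1)(2m+1-k)) for k odd and J_k = √((k+2α+2)(2m+2α+2-k)) for k even are exactly the numbers ±2(α+k+1) for k = 0,1,…,m; in particular if 2α is an integer, all eigenvalues are integers (up to the common shift), and for half-integer α the spectrum consists of even integers shifted by 2α+2. -/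
open Finset Matrix

namespace SpecAux


noncomputable def tE (d e : ℕ → ℝ) (i j : ℕ) : ℝ :=
  if i = j then d i else if i + 1 = j then e i else if j + 1 = i then e j else 0

noncomputable def trid (d e : ℕ → ℝ) (n : ℕ) : Matrix (Fin n) (Fin n) ℝ :=
  Matrix.of fun i j => tE d e i j

lemma succAbove_val {n : ℕ} (a : Fin (n + 2)) (i : Fin (n + 1)) :
    ((a.succAbove i : Fin (n + 2)) : ℕ) = if (i : ℕ) < (a : ℕ) then (i : ℕ) else (i : ℕ) + 1 := by
  rw [Fin.succAbove]
  rcases lt_or_ge (i.castSucc) a with h | h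
  · rw [if_pos h, if_pos (by simpa [Fin.lt_def] using h)]
    simp
  · rw [if_neg (not_lt.2 h), if_neg (by simpa [Fin.lt_def, not_lt] using Fin.le_def.mp h)]
    simp

lemma trid_det_rec (d e : ℕ → ℝ) (n : ℕ) :
    (trid d e (n + 2)).det =
      d (n + 1) * (trid d e (n + 1)).det - (e n) ^ 2 * (trid d e n).det := by
  classical
  set A := trid d e (n + 2) with hA
  set a : Fin (n + 2) := ⟨n, by omega⟩ with ha
  set b : Fin (n + 2) := Fin.last (n + 1) with hb
  have hab : a ≠ b := Fin.ne_of_val_ne (by show n ≠ n + 1; omega)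
  have hzero : ∀ j : Fin (n + 2), j ∉ ({a, b} : Finset (Fin (n + 2))) →
      (-1 : ℝ) ^ ((b : ℕ) + (j : ℕ)) * A b j *
        (A.submatrix b.succAbove j.succAbove).det = 0 := by
    intro j hj
    simp only [Finset.mem_insert, Finset.mem_singleton] at hj
    push_neg at hj
    have h1 : (j : ℕ) ≠ n := fun h => hj.1 (Fin.ext h)
    have h2 : (j : ℕ) ≠ n + 1 := fun h => hj.2 (by simp [Fin.ext_iff, hb, h])
    have hz : A b j = 0 := by
      show tE d e (n + 1) (j : ℕ) = 0
      have hjlt : (j : ℕ) < n + 2 := j.isLt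
      unfold tE
      rw [if_neg (by omega), if_neg (by omega), if_neg (by omega)]
    rw [hz]; ring
  have hsum : A.det = (-1 : ℝ) ^ ((b : ℕ) + (a : ℕ)) * A b a *
        (A.submatrix b.succAbove a.succAbove).det
      + (-1 : ℝ) ^ ((b : ℕ) + (b : ℕ)) * A b b *
        (A.submatrix b.succAbove b.succAbove).det := by
    rw [Matrix.det_succ_row A b]
    rw [← Finset.sum_subset (Finset.subset_univ ({a, b} : Finset (Fin (n + 2))))
      (fun j _ hj => hzero j hj)]
    rw [Finset.sum_pair hab]
  -- values of entries
  have hba : A b a = e n := by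
    show tE d e (n + 1) n = e n
    unfold tE
    rw [if_neg (by omega), if_neg (by omega), if_pos rfl]
  have hbb : A b b = d (n + 1) := by
    show tE d e (n + 1) (n + 1) = d (n + 1)
    unfold tE
    rw [if_pos rfl]
  -- submatrix for b b is trid (n+1)
  have hsubbb : A.submatrix b.succAbove b.succAbove = trid d e (n + 1) := by
    ext i j
    show tE d e (b.succAbove i : ℕ) (b.succAbove j : ℕ) = tE d e i j
    rw [succAbove_val, succAbove_val]
    have hi : (i : ℕ) < n + 1 := i.isLt
    have hj : (j : ℕ) < n + 1 := j.isLt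
    rw [if_pos (show (i : ℕ) < (b : ℕ) from i.isLt), if_pos (show (j : ℕ) < (b : ℕ) from j.isLt)]
  -- the mixed cofactor
  set B := A.submatrix b.succAbove a.succAbove with hBdef
  have hBentry : ∀ (i j : Fin (n + 1)), B i j
      = tE d e (i : ℕ) (if (j : ℕ) < n then (j : ℕ) else (j : ℕ) + 1) := by
    intro i j
    show tE d e (b.succAbove i : ℕ) (a.succAbove j : ℕ) = _
    rw [succAbove_val, succAbove_val]
    rw [if_pos (show (i : ℕ) < (b : ℕ) from i.isLt)]
  have hBdet : B.det = e n * (trid d e n).det := by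
    rcases n with _ | n'
    · -- n = 0 : B is 1x1
      rw [Matrix.det_fin_one, Matrix.det_fin_zero, hBentry]
      show tE d e 0 1 = e 0 * 1
      unfold tE
      rw [if_neg (by omega), if_pos rfl]; ring
    · -- n = n' + 1
      set c : Fin (n' + 2) := Fin.last (n' + 1) with hc
      have hzero2 : ∀ i : Fin (n' + 2), i ∉ ({c} : Finset (Fin (n' + 2))) →
          (-1 : ℝ) ^ ((i : ℕ) + (c : ℕ)) * B i c *
            (B.submatrix i.succAbove c.succAbove).det = 0 := by
        intro i hi
        simp only [Finset.mem_singleton] at hi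
        have h1 : (i : ℕ) ≠ n' + 1 := fun h => hi (Fin.ext h)
        have hz : B i c = 0 := by
          rw [hBentry]
          rw [if_neg (show ¬ ((c : ℕ) < n' + 1) by show ¬ (n' + 1 < n' + 1); omega)]
          show tE d e (i : ℕ) (n' + 2) = 0
          have hilt : (i : ℕ) < n' + 2 := i.isLt
          unfold tE
          rw [if_neg (by omega), if_neg (by omega), if_neg (by omega)]
        rw [hz]; ring
      have hsum2 : B.det = (-1 : ℝ) ^ ((c : ℕ) + (c : ℕ)) * B c c *
          (B.submatrix c.succAbove c.succAbove).det := by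
        rw [Matrix.det_succ_column B c]
        rw [← Finset.sum_subset (Finset.subset_univ ({c} : Finset (Fin (n' + 2))))
          (fun i _ hi => hzero2 i hi)]
        rw [Finset.sum_singleton]
      have hBcc : B c c = e (n' + 1) := by
        rw [hBentry]
        rw [if_neg (show ¬ ((c : ℕ) < n' + 1) by show ¬ (n' + 1 < n' + 1); omega)]
        show tE d e (n' + 1) (n' + 2) = e (n' + 1)
        unfold tE
        rw [if_neg (by omega), if_pos rfl]
      have hsub2 : B.submatrix c.succAbove c.succAbove = trid d e (n' + 1) := by
        ext i j
        show B (c.succAbove i) (c.succAbove j) = _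
        rw [hBentry]
        have hvi : ((c.succAbove i : Fin (n' + 2)) : ℕ) = (i : ℕ) := by
          rw [succAbove_val, if_pos (show (i : ℕ) < (c : ℕ) from i.isLt)]
        have hvj : ((c.succAbove j : Fin (n' + 2)) : ℕ) = (j : ℕ) := by
          rw [succAbove_val, if_pos (show (j : ℕ) < (c : ℕ) from j.isLt)]
        rw [hvi, hvj, if_pos (show (j : ℕ) < n' + 1 from j.isLt)]
        rfl
      rw [hsum2, hBcc, hsub2]
      have hcval : (c : ℕ) = n' + 1 := rfl
      rw [hcval]
      have hsgn : (-1 : ℝ) ^ (n' + 1 + (n' + 1)) = 1 := by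
        have : (n' + 1 + (n' + 1)) = 2 * (n' + 1) := by omega
        rw [this, pow_mul]; norm_num
      rw [hsgn]; ring
  rw [hsum, hba, hbb, hsubbb, hBdet]
  have hb1 : (b : ℕ) = n + 1 := rfl
  have ha1 : (a : ℕ) = n := rfl
  rw [hb1, ha1]
  have h1 : (-1 : ℝ) ^ (n + 1 + n) = -1 := by
    have : (n + 1 + n) = 2 * n + 1 := by omega
    rw [this, pow_succ, pow_mul]; norm_num
  have h2 : (-1 : ℝ) ^ (n + 1 + (n + 1)) = 1 := by
    have : (n + 1 + (n + 1)) = 2 * (n + 1) := by omega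
    rw [this, pow_mul]; norm_num
  rw [h1, h2]; ring


lemma poch_zero (a : ℝ) : poch a 0 = 1 := by simp [poch]

lemma poch_succ_back (a : ℝ) (n : ℕ) : poch a (n + 1) = poch a n * (a + n) := by
  simp [poch, Finset.prod_range_succ]

lemma poch_succ_front (a : ℝ) (n : ℕ) : poch a (n + 1) = a * poch (a + 1) n := by
  rw [poch, Finset.prod_range_succ']
  simp only [Nat.cast_zero, add_zero, Nat.cast_add, Nat.cast_one]
  rw [mul_comm]
  congr 1
  apply Finset.prod_congr rfl
  intro i _
  push_cast
  ring

lemma poch_pos {a : ℝ} (h : 0 < a) (n : ℕ) : 0 < poch a n := by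
  apply Finset.prod_pos
  intro i _
  positivity

/-- coefficients of the minor polynomials in the Newton basis -/
noncomputable def cc (m j k : ℕ) : ℝ :=
  (-4 : ℝ) ^ (j - k) * (j.descFactorial (j - k) : ℝ) * ((m - k).choose (j - k) : ℝ)

lemma cc_self (m j : ℕ) : cc m j j = 1 := by simp [cc]

lemma ccA {m j k : ℕ} (hk : k ≤ j) (hj : j ≤ m) :
    cc m (j + 1) k * ((j : ℝ) + 1 - k) = -4 * ((j : ℝ) + 1) * ((m : ℝ) - j) * cc m j k := by
  obtain ⟨n, rfl⟩ := Nat.exists_eq_add_of_le hk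
  unfold cc
  rw [show k + n + 1 - k = n + 1 by omega, show k + n - k = n by omega]
  rw [Nat.succ_descFactorial_succ]
  have key : ((m - k).choose (n + 1) : ℝ) * ((n : ℝ) + 1)
      = ((m - k).choose n : ℝ) * ((m : ℝ) - ((k : ℝ) + n)) := by
    have h := Nat.choose_succ_right_eq (m - k) n
    have h2 : m - k - n = m - (k + n) := by omega
    rw [h2] at h
    have h3 : ((m - (k + n) : ℕ) : ℝ) = (m : ℝ) - ((k : ℝ) + (n : ℝ)) := by
      rw [Nat.cast_sub hj]; push_cast; ring
    have h' := congrArg (fun t : ℕ => (t : ℝ)) h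
    simp only [Nat.cast_mul] at h'
    rw [h3] at h'
    push_cast at h' ⊢
    linarith [h']
  push_cast
  linear_combination ((-4 : ℝ) ^ (n + 1) * ((k : ℝ) + n + 1) * ((k + n).descFactorial n : ℝ)) * key

lemma ccB {m j k : ℕ} (hk : k ≤ j) (hj : j ≤ m) :
    cc m (j + 1) k = (if k = 0 then 0 else cc m j (k - 1))
      + 4 * cc m j k * ((k : ℝ) + (j : ℝ) - (m : ℝ)) := by
  rcases Nat.eq_zero_or_pos k with rfl | hk1
  · -- k = 0
    simp only [if_pos rfl]
    unfold cc
    simp only [Nat.sub_zero]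
    rw [Nat.succ_descFactorial_succ]
    have key : ((m).choose (j + 1) : ℝ) * ((j : ℝ) + 1)
        = ((m).choose j : ℝ) * ((m : ℝ) - (j : ℝ)) := by
      have h := Nat.choose_succ_right_eq m j
      have h3 : ((m - j : ℕ) : ℝ) = (m : ℝ) - (j : ℝ) := by
        rw [Nat.cast_sub hj]
      have h' := congrArg (fun t : ℕ => (t : ℝ)) h
      simp only [Nat.cast_mul] at h'
      rw [h3] at h'
      push_cast at h' ⊢
      linarith [h']
    push_cast
    linear_combination ((-4 : ℝ) ^ (j + 1) * ((j.descFactorial j : ℕ) : ℝ)) * key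
  · -- k ≥ 1
    rw [if_neg (by omega)]
    obtain ⟨n, rfl⟩ := Nat.exists_eq_add_of_le hk
    unfold cc
    rw [show k + n + 1 - k = n + 1 by omega, show k + n - k = n by omega,
      show k + n - (k - 1) = n + 1 by omega, show m - (k - 1) = (m - k) + 1 by omega]
    rw [Nat.succ_descFactorial_succ, Nat.descFactorial_succ,
      show k + n - n = k by omega]
    have hjm : k + n ≤ m := hj
    have key : ((m - k).choose (n + 1) : ℝ) * ((n : ℝ) + 1)
        = ((m - k).choose n : ℝ) * ((m : ℝ) - (k : ℝ) - (n : ℝ)) := by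
      have h := Nat.choose_succ_right_eq (m - k) n
      have h3 : ((m - k - n : ℕ) : ℝ) = (m : ℝ) - (k : ℝ) - (n : ℝ) := by
        rw [show m - k - n = m - (k + n) by omega, Nat.cast_sub hjm]
        push_cast; ring
      have h' := congrArg (fun t : ℕ => (t : ℝ)) h
      simp only [Nat.cast_mul] at h'
      rw [h3] at h'
      push_cast at h' ⊢
      linarith [h']
    have pascal : (((m - k) + 1).choose (n + 1) : ℝ)
        = ((m - k).choose n : ℝ) + ((m - k).choose (n + 1) : ℝ) := by
      rw [Nat.choose_succ_succ]
      push_cast; ring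
    push_cast
    linear_combination ((-4 : ℝ) ^ (n + 1) * (((k + n).descFactorial n : ℕ) : ℝ)) * key
      + (((-4 : ℝ) ^ (n + 1) + 8 * (-4 : ℝ) ^ n) * (k : ℝ) * (((k + n).descFactorial n : ℕ) : ℝ)) * pascal

lemma poch_diff (a : ℝ) (n : ℕ) :
    poch (a + 1) (n + 1) - poch a (n + 1) = ((n : ℝ) + 1) * poch (a + 1) n := by
  rw [poch_succ_back, poch_succ_front]
  ring

/-- Newton basis products -/
noncomputable def NB (α ε : ℝ) (k : ℕ) : ℝ :=
  ∏ i ∈ Finset.range k, (ε ^ 2 - (2 * α + 2 * i + 2) ^ 2)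

lemma NB_zero (α ε : ℝ) : NB α ε 0 = 1 := by simp [NB]

lemma NB_succ (α ε : ℝ) (k : ℕ) :
    NB α ε (k + 1) = NB α ε k * (ε ^ 2 - (2 * α + 2 * k + 2) ^ 2) := by
  simp [NB, Finset.prod_range_succ]

noncomputable def Pp (α ε : ℝ) (m j : ℕ) : ℝ :=
  ∑ k ∈ Finset.range (j + 1), cc m j k * poch (α + k + 1) (j - k) * NB α ε k

noncomputable def Qq (α ε : ℝ) (m j : ℕ) : ℝ :=
  ∑ k ∈ Finset.range (j + 1), cc m j k * poch (α + k + 2) (j - k) * NB α ε k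

lemma Pp_zero (α ε : ℝ) (m : ℕ) : Pp α ε m 0 = 1 := by
  simp [Pp, cc_self, poch_zero, NB_zero]

lemma Qq_zero (α ε : ℝ) (m : ℕ) : Qq α ε m 0 = 1 := by
  simp [Qq, cc_self, poch_zero, NB_zero]

lemma R1 {m j : ℕ} (α ε : ℝ) (hj : j ≤ m) :
    Qq α ε m (j + 1) = Pp α ε m (j + 1)
      - 4 * ((j : ℝ) + 1) * ((m : ℝ) - (j : ℝ)) * Qq α ε m j := by
  have hQ : Qq α ε m (j + 1) - Pp α ε m (j + 1)
      = - (4 * ((j : ℝ) + 1) * ((m : ℝ) - (j : ℝ)) * Qq α ε m j) := by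
    rw [Qq, Pp, ← Finset.sum_sub_distrib]
    have step : ∀ k ∈ Finset.range (j + 2),
        cc m (j + 1) k * poch (α + k + 2) (j + 1 - k) * NB α ε k
          - cc m (j + 1) k * poch (α + k + 1) (j + 1 - k) * NB α ε k
        = (if k ≤ j then
            -(4 * ((j : ℝ) + 1) * ((m : ℝ) - (j : ℝ))
              * (cc m j k * poch (α + k + 2) (j - k) * NB α ε k)) else 0) := by
      intro k hkmem
      simp only [Finset.mem_range] at hkmem
      rcases Nat.lt_or_ge k (j + 1) with hk | hk
      · have hkj : k ≤ j := by omega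
        rw [if_pos hkj]
        have h1 : j + 1 - k = (j - k) + 1 := by omega
        rw [h1]
        have h2 : α + k + 2 = (α + k + 1) + 1 := by ring
        rw [h2]
        have hdiff := poch_diff (α + ↑k + 1) (j - k)
        have hcast : ((j - k : ℕ) : ℝ) = (j : ℝ) - (k : ℝ) := by
          rw [Nat.cast_sub hkj]
        have hA := ccA (m := m) (j := j) (k := k) hkj hj
        -- LHS = cc (j+1) k * (poch diff) * NB k
        calc cc m (j + 1) k * poch (α + k + 1 + 1) (j - k + 1) * NB α ε k
              - cc m (j + 1) k * poch (α + k + 1) (j - k + 1) * NB α ε k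
            = cc m (j + 1) k * (poch (α + ↑k + 1 + 1) (j - k + 1)
                - poch (α + ↑k + 1) (j - k + 1)) * NB α ε k := by ring
          _ = cc m (j + 1) k * (((j : ℝ) - k + 1) * poch (α + ↑k + 1 + 1) (j - k)) * NB α ε k := by
              rw [hdiff, hcast]
          _ = (cc m (j + 1) k * ((j : ℝ) + 1 - k)) * poch (α + ↑k + 1 + 1) (j - k) * NB α ε k := by
              ring
          _ = _ := by rw [hA]; ring_nf
      · have hkj : k = j + 1 := by omega
        subst hkj
        rw [if_neg (by omega)]
        simp [cc_self, poch_zero]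
    rw [Finset.sum_congr rfl step]
    rw [Finset.sum_range_succ, if_neg (by omega), add_zero]
    have hall : ∀ k ∈ Finset.range (j + 1),
        (if k ≤ j then
            -(4 * ((j : ℝ) + 1) * ((m : ℝ) - (j : ℝ))
              * (cc m j k * poch (α + k + 2) (j - k) * NB α ε k)) else 0)
        = -(4 * ((j : ℝ) + 1) * ((m : ℝ) - (j : ℝ))
              * (cc m j k * poch (α + k + 2) (j - k) * NB α ε k)) := by
      intro k hk
      simp only [Finset.mem_range] at hk
      exact if_pos (by omega)
    rw [Finset.sum_congr rfl hall, Finset.sum_neg_distrib, Qq, Finset.mul_sum]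
  linarith [hQ]

lemma R2 {m j : ℕ} (α ε : ℝ) (hα : -1 < α) (hj : j ≤ m) :
    Pp α ε m (j + 1) = ε ^ 2 * Qq α ε m j
      - 4 * (α + (j : ℝ) + 1) * (α + (m : ℝ) + 1 - (j : ℝ)) * Pp α ε m j := by
  have hjn : (0 : ℝ) ≤ (j : ℝ) := Nat.cast_nonneg j
  have hapos : (0 : ℝ) < α + (j : ℝ) + 1 := by linarith
  have hne : (α + (j : ℝ) + 1) ≠ 0 := ne_of_gt hapos
  have stepA : ∀ k, k ≤ j →
      (if k = 0 then 0 else cc m j (k - 1) * poch (α + k + 1) (j + 1 - k))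
        + cc m j k * poch (α + k + 2) (j - k) * (2 * α + 2 * (k : ℝ) + 2) ^ 2
        - 4 * (α + (j : ℝ) + 1) * (α + (m : ℝ) + 1 - (j : ℝ))
          * (cc m j k * poch (α + k + 1) (j - k))
      = cc m (j + 1) k * poch (α + k + 1) (j + 1 - k) := by
    intro k hk
    have hp2 : poch (α + k + 1) (j + 1 - k) = (α + k + 1) * poch (α + k + 2) (j - k) := by
      rw [show j + 1 - k = (j - k) + 1 by omega, poch_succ_front,
        show α + ↑k + 1 + 1 = α + ↑k + 2 by ring]
    have hp1 : (α + (j : ℝ) + 1) * poch (α + k + 1) (j - k)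
        = (α + k + 1) * poch (α + k + 2) (j - k) := by
      have h1 := poch_succ_back (α + (k : ℝ) + 1) (j - k)
      have h2 := poch_succ_front (α + (k : ℝ) + 1) (j - k)
      rw [show α + ↑k + 1 + 1 = α + ↑k + 2 by ring] at h2
      rw [Nat.cast_sub hk] at h1
      linear_combination h2 - h1
    have hB := ccB (m := m) (j := j) (k := k) hk hj
    have key : (α + (j : ℝ) + 1) * ((if k = 0 then 0 else cc m j (k - 1) * poch (α + k + 1) (j + 1 - k))
        + cc m j k * poch (α + k + 2) (j - k) * (2 * α + 2 * (k : ℝ) + 2) ^ 2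
        - 4 * (α + (j : ℝ) + 1) * (α + (m : ℝ) + 1 - (j : ℝ))
          * (cc m j k * poch (α + k + 1) (j - k)))
        = (α + (j : ℝ) + 1) * (cc m (j + 1) k * poch (α + k + 1) (j + 1 - k)) := by
      rw [hp2]
      have hT : (if k = 0 then (0 : ℝ) else cc m j (k - 1) * ((α + k + 1) * poch (α + k + 2) (j - k)))
          = (if k = 0 then 0 else cc m j (k - 1)) * ((α + k + 1) * poch (α + k + 2) (j - k)) := by
        split <;> simp
      rw [hT]
      linear_combination (-(4 : ℝ) * (α + (m : ℝ) + 1 - (j : ℝ)) * (α + (j : ℝ) + 1) * cc m j k) * hp1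
        - ((α + (j : ℝ) + 1) * (α + (k : ℝ) + 1) * poch (α + (k : ℝ) + 2) (j - k)) * hB
    exact mul_left_cancel₀ hne key
  -- now assemble the sums
  have hRHS : ε ^ 2 * Qq α ε m j
      = (∑ k ∈ Finset.range (j + 1), cc m j k * poch (α + k + 2) (j - k) * NB α ε (k + 1))
        + ∑ k ∈ Finset.range (j + 1),
            cc m j k * poch (α + k + 2) (j - k) * (2 * α + 2 * (k : ℝ) + 2) ^ 2 * NB α ε k := by
    rw [Qq, Finset.mul_sum, ← Finset.sum_add_distrib]
    apply Finset.sum_congr rfl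
    intro k _
    rw [NB_succ]
    ring
  have hS1 : (∑ k ∈ Finset.range (j + 1), cc m j k * poch (α + k + 2) (j - k) * NB α ε (k + 1))
      = (∑ k ∈ Finset.range j, cc m j k * poch (α + k + 2) (j - k) * NB α ε (k + 1))
        + NB α ε (j + 1) := by
    rw [Finset.sum_range_succ, cc_self]
    simp [poch_zero]
  have hshift : (∑ k ∈ Finset.range j, cc m j k * poch (α + k + 2) (j - k) * NB α ε (k + 1))
      = ∑ k ∈ Finset.range (j + 1),
          (if k = 0 then 0 else cc m j (k - 1) * poch (α + k + 1) (j + 1 - k)) * NB α ε k := by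
    rw [Finset.sum_range_succ']
    norm_num
    apply Finset.sum_congr rfl
    intro k _
    rw [show j + 1 - (k + 1) = j - k by omega,
      show α + ((k : ℝ) + 1) + 1 = α + (k : ℝ) + 2 by ring]
  -- left side expansion
  have hLHS : Pp α ε m (j + 1)
      = (∑ k ∈ Finset.range (j + 1), cc m (j + 1) k * poch (α + k + 1) (j + 1 - k) * NB α ε k)
        + NB α ε (j + 1) := by
    rw [Pp, Finset.sum_range_succ, cc_self]
    simp [poch_zero]
  rw [hLHS, hRHS, hS1, hshift, Pp, Finset.mul_sum]
  have : ∀ k ∈ Finset.range (j + 1),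
      ((if k = 0 then 0 else cc m j (k - 1) * poch (α + k + 1) (j + 1 - k)) * NB α ε k
        + cc m j k * poch (α + k + 2) (j - k) * (2 * α + 2 * (k : ℝ) + 2) ^ 2 * NB α ε k)
      - 4 * (α + (j : ℝ) + 1) * (α + (m : ℝ) + 1 - (j : ℝ))
          * (cc m j k * poch (α + k + 1) (j - k) * NB α ε k)
      = cc m (j + 1) k * poch (α + k + 1) (j + 1 - k) * NB α ε k := by
    intro k hk
    simp only [Finset.mem_range] at hk
    have := stepA k (by omega)
    calc _ = ((if k = 0 then 0 else cc m j (k - 1) * poch (α + k + 1) (j + 1 - k))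
        + cc m j k * poch (α + k + 2) (j - k) * (2 * α + 2 * (k : ℝ) + 2) ^ 2
        - 4 * (α + (j : ℝ) + 1) * (α + (m : ℝ) + 1 - (j : ℝ))
          * (cc m j k * poch (α + k + 1) (j - k))) * NB α ε k := by ring
      _ = _ := by rw [this]
  have hfin : (∑ k ∈ Finset.range (j + 1), cc m (j + 1) k * poch (α + k + 1) (j + 1 - k) * NB α ε k)
      = (∑ k ∈ Finset.range (j + 1),
          (if k = 0 then 0 else cc m j (k - 1) * poch (α + k + 1) (j + 1 - k)) * NB α ε k)
        + (∑ k ∈ Finset.range (j + 1),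
            cc m j k * poch (α + k + 2) (j - k) * (2 * α + 2 * (k : ℝ) + 2) ^ 2 * NB α ε k)
        - ∑ k ∈ Finset.range (j + 1),
            4 * (α + (j : ℝ) + 1) * (α + (m : ℝ) + 1 - (j : ℝ))
              * (cc m j k * poch (α + k + 1) (j - k) * NB α ε k) := by
    rw [← Finset.sum_add_distrib, ← Finset.sum_sub_distrib]
    exact (Finset.sum_congr rfl this).symm
  linarith [hfin]

lemma Pp_top (α ε : ℝ) (m : ℕ) : Pp α ε m (m + 1) = NB α ε (m + 1) := by
  rw [Pp, Finset.sum_range_succ, cc_self,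
    show m + 1 - (m + 1) = 0 by omega, poch_zero]
  have hz : ∀ k ∈ Finset.range (m + 1),
      cc m (m + 1) k * poch (α + k + 1) (m + 1 - k) * NB α ε k = 0 := by
    intro k hk
    simp only [Finset.mem_range] at hk
    have : cc m (m + 1) k = 0 := by
      unfold cc
      rw [Nat.choose_eq_zero_of_lt (by omega)]
      simp
    rw [this]; ring
  rw [Finset.sum_congr rfl hz]
  simp

lemma Jodd_sq (α : ℝ) (m j : ℕ) (hj : j ≤ m) :
    hahnJ α (α + 1) m (2 * j + 1) ^ 2 = 4 * ((j : ℝ) + 1) * ((m : ℝ) - (j : ℝ)) := by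
  have hjm : (j : ℝ) ≤ (m : ℝ) := by exact_mod_cast hj
  rw [hahnJ, if_pos (by omega)]
  rw [Real.sq_sqrt (by push_cast; nlinarith)]
  push_cast
  ring

lemma Jeven_sq (α : ℝ) (hα : -1 < α) (m j : ℕ) (hj : j ≤ m) :
    hahnJ α (α + 1) m (2 * j) ^ 2
      = 4 * (α + (j : ℝ) + 1) * (α + (m : ℝ) + 1 - (j : ℝ)) := by
  have hjm : (j : ℝ) ≤ (m : ℝ) := by exact_mod_cast hj
  have hj0 : (0 : ℝ) ≤ (j : ℝ) := Nat.cast_nonneg j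
  rw [hahnJ, if_neg (by omega)]
  rw [Real.sq_sqrt (by push_cast; nlinarith)]
  push_cast
  ring

lemma main_det (α ε : ℝ) (hα : -1 < α) (m : ℕ) : ∀ j : ℕ,
    (j ≤ m + 1 → (trid (fun _ => ε) (fun k => -(hahnJ α (α + 1) m k)) (2 * j)).det = Pp α ε m j)
    ∧ (j ≤ m → (trid (fun _ => ε) (fun k => -(hahnJ α (α + 1) m k)) (2 * j + 1)).det
        = ε * Qq α ε m j) := by
  intro j
  induction j with
  | zero =>
    constructor
    · intro _
      rw [Pp_zero]
      exact Matrix.det_fin_zero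
    · intro _
      rw [Qq_zero, mul_one]
      rw [show 2 * 0 + 1 = 1 by omega]
      rw [Matrix.det_fin_one]
      show tE (fun _ => ε) (fun k => -(hahnJ α (α + 1) m k)) 0 0 = ε
      unfold tE
      rw [if_pos rfl]
  | succ j ih =>
    have hfirst : j + 1 ≤ m + 1 →
        (trid (fun _ => ε) (fun k => -(hahnJ α (α + 1) m k)) (2 * (j + 1))).det
          = Pp α ε m (j + 1) := by
      intro h2
      have hjm : j ≤ m := by omega
      rw [show 2 * (j + 1) = 2 * j + 2 by omega, trid_det_rec]
      rw [show 2 * j + 1 = 2 * j + 1 from rfl]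
      rw [(ih.2 hjm), (ih.1 (by omega))]
      rw [neg_sq, Jeven_sq α hα m j hjm]
      rw [R2 α ε hα hjm]
      ring
    refine ⟨hfirst, ?_⟩
    intro h1
    have hjm : j ≤ m := by omega
    rw [show 2 * (j + 1) + 1 = (2 * j + 1) + 2 by omega, trid_det_rec]
    rw [show 2 * j + 1 + 1 = 2 * (j + 1) by omega]
    rw [ih.2 hjm, hfirst (by omega)]
    rw [neg_sq, Jodd_sq α m j hjm]
    rw [R1 α ε hjm]
    ring

lemma matrix_eq (α ε : ℝ) (m : ℕ) :
    ε • (1 : Matrix (Fin (2 * m + 2)) (Fin (2 * m + 2)) ℝ) - hahnM α (α + 1) m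
      = trid (fun _ => ε) (fun k => -(hahnJ α (α + 1) m k)) (2 * m + 2) := by
  ext i j
  simp only [Matrix.sub_apply, Matrix.smul_apply, Matrix.one_apply, hahnM,
    Matrix.of_apply, smul_eq_mul]
  show _ = tE (fun _ => ε) (fun k => -(hahnJ α (α + 1) m k)) (i : ℕ) (j : ℕ)
  unfold tE
  by_cases h1 : (i : ℕ) = (j : ℕ)
  · rw [if_pos h1, if_pos (Fin.ext h1), if_neg (by omega), if_neg (by omega)]
    ring
  · rw [if_neg h1, if_neg (fun hh => h1 (congrArg Fin.val hh))]
    by_cases h2 : (i : ℕ) + 1 = (j : ℕ)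
    · rw [if_pos h2, if_pos h2]; ring
    · rw [if_neg h2, if_neg h2]
      by_cases h3 : (j : ℕ) + 1 = (i : ℕ)
      · rw [if_pos h3, if_pos h3]; ring
      · rw [if_neg h3, if_neg h3]; ring

lemma det_char (α ε : ℝ) (hα : -1 < α) (m : ℕ) :
    (ε • (1 : Matrix (Fin (2 * m + 2)) (Fin (2 * m + 2)) ℝ) - hahnM α (α + 1) m).det
      = ∏ k ∈ Finset.range (m + 1), (ε ^ 2 - (2 * α + 2 * (k : ℝ) + 2) ^ 2) := by
  rw [matrix_eq, show 2 * m + 2 = 2 * (m + 1) by omega]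
  rw [(main_det α ε hα m (m + 1)).1 (le_refl _), Pp_top]
  rfl

lemma eig_iff (α : ℝ) (hα : α > -1) (m : ℕ) (ε : ℝ) :
    (∃ v : Fin (2 * m + 2) → ℝ, v ≠ 0 ∧ (hahnM α (α + 1) m).mulVec v = ε • v) ↔
      (∃ k : ℕ, k ≤ m ∧ (ε = 2 * (α + k + 1) ∨ ε = -(2 * (α + k + 1)))) := by
  have h1 : (∃ v : Fin (2 * m + 2) → ℝ, v ≠ 0 ∧ (hahnM α (α + 1) m).mulVec v = ε • v)
      ↔ ∃ v : Fin (2 * m + 2) → ℝ, v ≠ 0 ∧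
        (ε • (1 : Matrix (Fin (2 * m + 2)) (Fin (2 * m + 2)) ℝ)
          - hahnM α (α + 1) m).mulVec v = 0 := by
    apply exists_congr
    intro v
    apply and_congr_right'
    rw [Matrix.sub_mulVec, Matrix.smul_mulVec, Matrix.one_mulVec, sub_eq_zero, eq_comm]
  rw [h1, Matrix.exists_mulVec_eq_zero_iff, det_char α ε hα m, Finset.prod_eq_zero_iff]
  constructor
  · rintro ⟨k, hk, hzero⟩
    simp only [Finset.mem_range] at hk
    have hsq : ε ^ 2 = (2 * α + 2 * (k : ℝ) + 2) ^ 2 := by linarith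
    rcases sq_eq_sq_iff_eq_or_eq_neg.mp hsq with h | h
    · exact ⟨k, by omega, Or.inl (by rw [h]; ring)⟩
    · exact ⟨k, by omega, Or.inr (by rw [h]; ring)⟩
  · rintro ⟨k, hk, h | h⟩
    · exact ⟨k, Finset.mem_range.mpr (by omega), by rw [h]; ring⟩
    · exact ⟨k, Finset.mem_range.mpr (by omega), by rw [h]; ring⟩

end SpecAux

theorem hahn_spectrum_beta_eq_alpha_add_one (m : ℕ) (α : ℝ) (hα : α > -1) :
    (∀ ε : ℝ,
      (∃ v : Fin (2 * m + 2) → ℝ, v ≠ 0 ∧ (hahnM α (α + 1) m).mulVec v = ε • v) ↔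
      (∃ k : ℕ, k ≤ m ∧ (ε = 2 * (α + k + 1) ∨ ε = -(2 * (α + k + 1))))) ∧
    ((∃ z : ℤ, 2 * α = (z : ℝ)) →
      ∀ ε : ℝ, (∃ v : Fin (2 * m + 2) → ℝ, v ≠ 0 ∧ (hahnM α (α + 1) m).mulVec v = ε • v) →
        ∃ z : ℤ, ε = (z : ℝ) + (2 * α + 2) ∨ ε = -((z : ℝ) + (2 * α + 2))) ∧
    ((∃ l : ℤ, α = (l : ℝ) + 1 / 2) →
      ∀ ε : ℝ, (∃ v : Fin (2 * m + 2) → ℝ, v ≠ 0 ∧ (hahnM α (α + 1) m).mulVec v = ε • v) →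
        ∃ z : ℤ, Even z ∧ (ε = (z : ℝ) + (2 * α + 2) ∨ ε = -((z : ℝ) + (2 * α + 2)))) := by
  refine ⟨fun ε => SpecAux.eig_iff α hα m ε, ?_, ?_⟩
  · intro _ ε hev
    obtain ⟨k, _, h⟩ := (SpecAux.eig_iff α hα m ε).mp hev
    refine ⟨2 * k, ?_⟩
    rcases h with h | h
    · left; rw [h]; push_cast; ring
    · right; rw [h]; push_cast; ring
  · intro _ ε hev
    obtain ⟨k, _, h⟩ := (SpecAux.eig_iff α hα m ε).mp hev
    refine ⟨2 * k, ⟨k, by ring⟩, ?_⟩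
    rcases h with h | h
    · left; rw [h]; push_cast; ring
    · right; rw [h]; push_cast; ring
end
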